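/- Let M be a matroid on a finite ground set with bases B₁ and B₂. Then there exists a bijection φ : B₁ → B₂ such that for every u ∈ B₁, the set (B₁ \ {u}) ∪ {φ(u)} is a base of M (Brualdi's exchange bijection). -/

import Mathlib

open Set

theorem stmt_13 {α : Type*} (M : Matroid α) [M.Finite]
    {B₁ B₂ : Set α} (h₁ : M.IsBase B₁) (h₂ : M.IsBase B₂) :
    ∃ φ : B₁ ≃ B₂, ∀ u : B₁,
      M.IsBase (insert (↑(φ u)) (B₁ \ {(u : α)})) := by
  classical
  have hfin₁ : B₁.Finite := M.set_finite B₁ h₁.subset_ground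
  have hfin₂ : B₂.Finite := M.set_finite B₂ h₂.subset_ground
  have hcard : B₁.ncard = B₂.ncard := h₁.ncard_eq_ncard_of_isBase h₂
  have hD₂fin : (B₂ \ B₁).Finite := hfin₂.diff
  -- the bipartite neighbourhoods
  set t : ↥(B₁ \ B₂) → Finset α :=
    fun u => hD₂fin.toFinset.filter (fun v => M.IsBase (insert v (B₁ \ {(u : α)}))) with ht
  -- key single-exchange step
  have key : ∀ v ∉ B₁, ∀ A : Set α, A ⊆ B₁ \ B₂ →
      M.Indep (insert v (B₁ \ A)) → ∃ u ∈ A, M.IsBase (insert v (B₁ \ {u})) := by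
    intro v hvB₁ A hA hindep
    obtain ⟨B'', hB'', hJB, hBJ⟩ := hindep.exists_isBase_subset_union_isBase h₁
    have hBfin : B''.Finite := M.set_finite B'' hB''.subset_ground
    have hsub : B'' ⊆ insert v B₁ := by
      intro x hx
      rcases hBJ hx with h | h
      · rcases h with h | h
        · exact h ▸ mem_insert _ _
        · exact Or.inr h.1
      · exact Or.inr h
    have hv : v ∈ B'' := hJB (mem_insert _ _)
    have hcap : B₁ ∩ B'' = B'' \ {v} := by
      apply Subset.antisymm
      · rintro x ⟨hx1, hx2⟩
        exact ⟨hx2, fun h => hvB₁ (h ▸ hx1)⟩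
      · rintro x ⟨hx1, hx2⟩
        rcases hsub hx1 with h | h
        · exact absurd h hx2
        · exact ⟨h, hx1⟩
    have hcardB : B''.ncard = B₁.ncard := hB''.ncard_eq_ncard_of_isBase h₁
    have hone : (B₁ \ B'').ncard = 1 := by
      have h1 : (B₁ ∩ B'').ncard = B''.ncard - 1 := by
        rw [hcap, ncard_diff_singleton_of_mem hv]
      have h2 : (B₁ \ B'').ncard = B₁.ncard - (B₁ ∩ B'').ncard := by
        rw [← diff_self_inter, ncard_diff inter_subset_left (hfin₁.inter_of_left _)]
      have hpos : 1 ≤ B''.ncard := by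
        rw [Nat.one_le_iff_ne_zero]
        intro h0
        have := (ncard_eq_zero hBfin).mp h0
        simp [this] at hv
      omega
    obtain ⟨u, hu⟩ := ncard_eq_one.mp hone
    have huB₁ : u ∈ B₁ ∧ u ∉ B'' := by
      have : u ∈ B₁ \ B'' := hu ▸ rfl
      exact ⟨this.1, this.2⟩
    have huA : u ∈ A := by
      by_contra huA
      exact huB₁.2 (hJB (Or.inr ⟨huB₁.1, huA⟩))
    refine ⟨u, huA, ?_⟩
    have hBeq : B'' = insert v (B₁ \ {u}) := by
      apply Subset.antisymm
      · intro x hx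
        rcases hsub hx with h | h
        · exact h ▸ mem_insert _ _
        · refine Or.inr ⟨h, fun hxu => ?_⟩
          exact huB₁.2 (hxu ▸ hx)
      · rintro x (rfl | ⟨hx1, hx2⟩)
        · exact hv
        · by_contra hxB
          have : x ∈ B₁ \ B'' := ⟨hx1, hxB⟩
          rw [hu] at this
          exact hx2 this
    exact hBeq ▸ hB''
  -- Hall's condition
  have hall : ∀ s : Finset ↥(B₁ \ B₂), s.card ≤ (s.biUnion t).card := by
    intro s
    set A : Set α := (fun (u : ↥(B₁ \ B₂)) => (u : α)) '' ↑s with hA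
    have hAfin : A.Finite := (s.finite_toSet.image _)
    have hAB : A ⊆ B₁ \ B₂ := by rintro x ⟨u, _, rfl⟩; exact u.2
    have hAcard : A.ncard = s.card := by
      rw [hA, ncard_image_of_injective _ Subtype.val_injective]
      simp [ncard_coe_finset]
    have hI : M.Indep (B₁ \ A) := h₁.indep.subset diff_subset
    obtain ⟨B, hB, hIB, hBI⟩ := hI.exists_isBase_subset_union_isBase h₂
    have hBfin : B.Finite := M.set_finite B hB.subset_ground
    set Cs : Set α := B \ (B₁ \ A) with hCs
    have hCsub : Cs ⊆ B₂ \ B₁ := by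
      rintro v ⟨hvB, hvI⟩
      have hvB₂ : v ∈ B₂ := by
        rcases hBI hvB with h | h
        · exact absurd h hvI
        · exact h
      refine ⟨hvB₂, fun hvB₁ => ?_⟩
      have : v ∈ A := by
        by_contra h
        exact hvI ⟨hvB₁, h⟩
      exact (hAB this).2 hvB₂
    have hIcard : (B₁ \ A).ncard = B₁.ncard - s.card := by
      rw [ncard_diff (fun x hx => (hAB hx).1) hAfin, hAcard]
    have hAle : s.card ≤ B₁.ncard := by
      rw [← hAcard]
      exact ncard_le_ncard (fun x hx => (hAB hx).1) hfin₁
    have hCscard : Cs.ncard = s.card := by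
      rw [hCs, ncard_diff hIB (hfin₁.diff), hIcard, hB.ncard_eq_ncard_of_isBase h₁]
      omega
    -- each v in Cs lies in some neighbourhood
    have hCsN : Cs ⊆ ↑(s.biUnion t) := by
      intro v hv
      have hvB₁ : v ∉ B₁ := (hCsub hv).2
      have hindep : M.Indep (insert v (B₁ \ A)) :=
        hB.indep.subset (insert_subset hv.1 hIB)
      obtain ⟨u, huA, hbase⟩ := key v hvB₁ A hAB hindep
      obtain ⟨u', hu's, hu'⟩ := huA
      simp only [Finset.coe_biUnion, mem_iUnion, Finset.mem_coe]
      refine ⟨u', hu's, ?_⟩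
      rw [ht]
      simp only [Finset.mem_filter, Finite.mem_toFinset]
      have hu'' : (u' : α) = u := hu'
      exact ⟨hCsub hv, by rw [hu'']; exact hbase⟩
    calc s.card = Cs.ncard := hCscard.symm
      _ ≤ ((s.biUnion t : Finset α) : Set α).ncard :=
          ncard_le_ncard hCsN (s.biUnion t).finite_toSet
      _ = (s.biUnion t).card := ncard_coe_finset _
  obtain ⟨f, hfinj, hf⟩ := (Finset.all_card_le_biUnion_card_iff_exists_injective t).mp hall
  have hfmem : ∀ u : ↥(B₁ \ B₂), f u ∈ B₂ \ B₁ ∧ M.IsBase (insert (f u) (B₁ \ {(u : α)})) := by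
    intro u
    have := hf u
    rw [ht] at this
    simp only [Finset.mem_filter, Finite.mem_toFinset] at this
    exact this
  -- construct the map B₁ → B₂
  set g : ↥B₁ → ↥B₂ := fun u =>
    if h : (u : α) ∈ B₂ then ⟨u, h⟩
    else ⟨f ⟨u, ⟨u.2, h⟩⟩, (hfmem ⟨u, ⟨u.2, h⟩⟩).1.1⟩ with hg
  have hginj : Function.Injective g := by
    intro u₁ u₂ heq
    rw [hg] at heq
    by_cases h1 : (u₁ : α) ∈ B₂ <;> by_cases h2 : (u₂ : α) ∈ B₂ <;>
      simp only [h1, h2, dif_pos, dif_neg, not_false_iff] at heq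
    · rw [Subtype.mk.injEq] at heq
      exact Subtype.ext heq
    · have hv : (u₁ : α) = f ⟨u₂, ⟨u₂.2, h2⟩⟩ := Subtype.ext_iff.mp heq
      exact absurd (hv ▸ u₁.2) (hfmem ⟨u₂, ⟨u₂.2, h2⟩⟩).1.2
    · have hv : f ⟨u₁, ⟨u₁.2, h1⟩⟩ = (u₂ : α) := Subtype.ext_iff.mp heq
      exact absurd (hv.symm ▸ u₂.2) (hfmem ⟨u₁, ⟨u₁.2, h1⟩⟩).1.2
    · have := hfinj (Subtype.ext_iff.mp heq : f ⟨u₁, ⟨u₁.2, h1⟩⟩ = f ⟨u₂, ⟨u₂.2, h2⟩⟩)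
      replace this := congrArg Subtype.val this
      exact Subtype.ext this
  have : Finite ↥B₂ := hfin₂.to_subtype
  have : Finite ↥B₁ := hfin₁.to_subtype
  have hgbij : Function.Bijective g := by
    rw [Nat.bijective_iff_injective_and_card]
    refine ⟨hginj, ?_⟩
    rw [Nat.card_coe_set_eq, Nat.card_coe_set_eq, hcard]
  refine ⟨Equiv.ofBijective g hgbij, fun u => ?_⟩
  show M.IsBase (insert (↑(g u)) (B₁ \ {(u : α)}))
  rw [hg]
  by_cases h : (u : α) ∈ B₂
  · simp only [h, dif_pos]
    rw [insert_diff_singleton, insert_eq_self.mpr u.2]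
    exact h₁
  · simp only [h, dif_neg, not_false_iff]
    exact (hfmem ⟨u, ⟨u.2, h⟩⟩).2
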